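/- On the probability space (Φ, μ), the process (X_n)_{n∈ℕ} is an ℝ^d-valued martingale with respect to the filtration (ℱ_n), where ℱ_n := σ(X_1, …, X_n): each X_n is bounded and measurable, and for every n ≥ 0, the conditional expectation of the increment D_n := X_{n+1} − X_n given ℱ_n vanishes μ-a.s.: 𝔼_μ[D_n | ℱ_n] = 0. -/

import Mathlib

open MeasureTheory Filter Topology

namespace RWRE

/-- `ℤ^d` -/
abbrev Zd (d : ℕ) := Fin d → ℤ

variable {Ω : Type*} {d N : ℕ}

/-- `q_i(ω) = p_{0 d_i}(ω)`. -/
noncomputable def q (p : Ω → Zd d → Zd d → ℝ) (dv : Fin N → Zd d) (ω : Ω) (i : Fin N) : ℝ :=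
  p ω 0 (dv i)

/-- Partial sums `a_i(ω) = q_1(ω) + ⋯ + q_i(ω)`, `a_0 = 0`. -/
noncomputable def aPt (p : Ω → Zd d → Zd d → ℝ) (dv : Fin N → Zd d) (ω : Ω) : ℕ → ℝ
  | 0 => 0
  | (i + 1) => aPt p dv ω i + (if h : i < N then q p dv ω ⟨i, h⟩ else 0)

/-- `i(s,ω)`: the unique `i` with `s ∈ I_i(ω) = [a_{i-1}(ω), a_i(ω))`. -/
noncomputable def idx [NeZero N] (p : Ω → Zd d → Zd d → ℝ) (dv : Fin N → Zd d)
    (s : ℝ) (ω : Ω) : Fin N :=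
  if h : ∃ i : Fin N, aPt p dv ω i ≤ s ∧ s < aPt p dv ω (i + 1) then h.choose else 0

/-- The displacement function `D(s,ω) = d_{i(s,ω)}`. -/
noncomputable def Dspl [NeZero N] (p : Ω → Zd d → Zd d → ℝ) (dv : Fin N → Zd d)
    (s : ℝ) (ω : Ω) : Zd d :=
  dv (idx p dv s ω)

/-- The fiber map `φ(s,ω) = q_{i(s,ω)}(ω)⁻¹ (s - a_{i(s,ω)-1}(ω))`. -/
noncomputable def fib [NeZero N] (p : Ω → Zd d → Zd d → ℝ) (dv : Fin N → Zd d)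
    (s : ℝ) (ω : Ω) : ℝ :=
  (q p dv ω (idx p dv s ω))⁻¹ * (s - aPt p dv ω (idx p dv s ω))

/-- The point-of-view-of-the-particle map `T(s,ω) = (φ(s,ω), τ_{D(s,ω)} ω)`. -/
noncomputable def T [NeZero N] (τ : Zd d → Ω → Ω) (p : Ω → Zd d → Zd d → ℝ)
    (dv : Fin N → Zd d) : ℝ × Ω → ℝ × Ω :=
  fun x => (fib p dv x.1 x.2, τ (Dspl p dv x.1 x.2) x.2)

/-- The walk `X_n = Σ_{k<n} D ∘ T^k`. -/
noncomputable def X [NeZero N] (τ : Zd d → Ω → Ω) (p : Ω → Zd d → Zd d → ℝ)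
    (dv : Fin N → Zd d) (n : ℕ) (x : ℝ × Ω) : Zd d :=
  ∑ k ∈ Finset.range n, Dspl p dv ((T τ p dv)^[k] x).1 ((T τ p dv)^[k] x).2

/-- `n`-step transition probabilities. -/
noncomputable def nstep (p : Ω → Zd d → Zd d → ℝ) (ω : Ω) : ℕ → Zd d → Zd d → ℝ
  | 0 => fun x y => if x = y then 1 else 0
  | (n + 1) => fun x y => ∑' z, nstep p ω n x z * p ω z y


section Aux

variable (p : Ω → Zd d → Zd d → ℝ) (dv : Fin N → Zd d)

/-- real vector of a displacement -/
noncomputable def dvR (dv : Fin N → Zd d) (i : Fin N) : Fin d → ℝ := fun α => ((dv i α : ℤ) : ℝ)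

lemma aPt_succ_fin (ω : Ω) (i : Fin N) :
    aPt p dv ω (↑i + 1) = aPt p dv ω ↑i + q p dv ω i := by
  show aPt p dv ω ↑i + _ = _
  rw [dif_pos i.isLt]

lemma aPt_mono (hp_nn : ∀ ω x y, 0 ≤ p ω x y) (ω : Ω) : Monotone (aPt p dv ω) := by
  apply monotone_nat_of_le_succ
  intro n
  have h : 0 ≤ (if h : n < N then q p dv ω ⟨n, h⟩ else 0) := by
    split
    · exact hp_nn ω 0 _
    · exact le_refl 0
  show aPt p dv ω n ≤ aPt p dv ω n + _
  linarith

lemma aPt_nonneg (hp_nn : ∀ ω x y, 0 ≤ p ω x y) (ω : Ω) (n : ℕ) : 0 ≤ aPt p dv ω n := by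
  have := aPt_mono p dv hp_nn ω (Nat.zero_le n)
  simpa [aPt] using this

lemma sum_q (hdv : Function.Injective dv)
    (hnorm : ∀ ω x, HasSum (fun y => p ω x y) 1)
    (hrange : ∀ ω x y, p ω x y ≠ 0 → ∃ i, y - x = dv i) (ω : Ω) :
    ∑ i : Fin N, q p dv ω i = 1 := by
  have h2 : HasSum (fun y => p ω 0 y) (∑ y ∈ Finset.image dv Finset.univ, p ω 0 y) := by
    apply hasSum_sum_of_ne_finset_zero
    intro y hy
    by_contra h
    obtain ⟨i, hi⟩ := hrange ω 0 y h
    exact hy (Finset.mem_image.2 ⟨i, Finset.mem_univ i, by rw [← hi]; simp⟩)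
  have h3 := h2.unique (hnorm ω 0)
  rw [Finset.sum_image (fun a _ b _ h => hdv h)] at h3
  exact h3

lemma aPt_N (hdv : Function.Injective dv)
    (hnorm : ∀ ω x, HasSum (fun y => p ω x y) 1)
    (hrange : ∀ ω x y, p ω x y ≠ 0 → ∃ i, y - x = dv i) (ω : Ω) :
    aPt p dv ω N = 1 := by
  have hs : ∀ n : ℕ, aPt p dv ω n =
      ∑ i ∈ Finset.range n, (if h : i < N then q p dv ω ⟨i, h⟩ else 0) := by
    intro n
    induction n with
    | zero => simp [aPt]
    | succ n ih => rw [Finset.sum_range_succ, ← ih]; rfl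
  rw [hs, ← Fin.sum_univ_eq_sum_range (fun k => if h : k < N then q p dv ω ⟨k, h⟩ else 0) N]
  rw [← sum_q p dv hdv hnorm hrange ω]
  apply Finset.sum_congr rfl
  intro i _
  rw [dif_pos i.isLt]

lemma step_unique {f : ℕ → ℝ} (hf : Monotone f) {s : ℝ} {i j : ℕ}
    (hi : f i ≤ s ∧ s < f (i + 1)) (hj : f j ≤ s ∧ s < f (j + 1)) : i = j := by
  rcases lt_trichotomy i j with h | h | h
  · exact absurd (le_trans (hf (Nat.succ_le_of_lt h)) hj.1) (not_le.2 hi.2)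
  · exact h
  · exact absurd (le_trans (hf (Nat.succ_le_of_lt h)) hi.1) (not_le.2 hj.2)

lemma exists_good [NeZero N] (hp_nn : ∀ ω x y, 0 ≤ p ω x y)
    (hdv : Function.Injective dv)
    (hnorm : ∀ ω x, HasSum (fun y => p ω x y) 1)
    (hrange : ∀ ω x y, p ω x y ≠ 0 → ∃ i, y - x = dv i)
    (ω : Ω) {s : ℝ} (h0 : 0 ≤ s) (h1 : s < 1) :
    ∃ i : Fin N, aPt p dv ω i ≤ s ∧ s < aPt p dv ω (↑i + 1) := by
  classical
  set P : ℕ → Prop := fun j => aPt p dv ω j ≤ s with hP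
  have hP0 : P 0 := by simpa [hP, aPt] using h0
  set k := Nat.findGreatest P N with hk
  have hPk : P k := Nat.findGreatest_spec (Nat.zero_le N) hP0
  have hkN : k ≤ N := Nat.findGreatest_le N
  have hkne : k ≠ N := by
    intro h
    have := hPk
    have h2 : aPt p dv ω k ≤ s := hPk
    rw [h, aPt_N p dv hdv hnorm hrange ω] at h2
    linarith
  have hklt : k < N := lt_of_le_of_ne hkN hkne
  have hnot : ¬ P (k + 1) :=
    Nat.findGreatest_is_greatest (Nat.lt_succ_self k) (Nat.succ_le_of_lt hklt)
  exact ⟨⟨k, hklt⟩, hPk, not_le.1 hnot⟩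

lemma idx_spec [NeZero N] (hp_nn : ∀ ω x y, 0 ≤ p ω x y)
    (hdv : Function.Injective dv)
    (hnorm : ∀ ω x, HasSum (fun y => p ω x y) 1)
    (hrange : ∀ ω x y, p ω x y ≠ 0 → ∃ i, y - x = dv i)
    (ω : Ω) {s : ℝ} (h0 : 0 ≤ s) (h1 : s < 1) :
    aPt p dv ω (idx p dv s ω) ≤ s ∧ s < aPt p dv ω (↑(idx p dv s ω) + 1) := by
  have hex := exists_good p dv hp_nn hdv hnorm hrange ω h0 h1
  rw [idx, dif_pos hex]
  exact hex.choose_spec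

lemma idx_eq_iff [NeZero N] (hp_nn : ∀ ω x y, 0 ≤ p ω x y)
    (hdv : Function.Injective dv)
    (hnorm : ∀ ω x, HasSum (fun y => p ω x y) 1)
    (hrange : ∀ ω x y, p ω x y ≠ 0 → ∃ i, y - x = dv i)
    (ω : Ω) {s : ℝ} (h0 : 0 ≤ s) (h1 : s < 1) (i : Fin N) :
    idx p dv s ω = i ↔ (aPt p dv ω i ≤ s ∧ s < aPt p dv ω (↑i + 1)) := by
  constructor
  · rintro rfl
    exact idx_spec p dv hp_nn hdv hnorm hrange ω h0 h1
  · intro hi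
    have hs := idx_spec p dv hp_nn hdv hnorm hrange ω h0 h1
    exact Fin.ext (step_unique (aPt_mono p dv hp_nn ω) hs hi)

lemma sum_dv_mul_q (hdv : Function.Injective dv)
    (hdrift : ∀ ω x, HasSum
      (fun y : Zd d => fun α : Fin d => (((y - x) α : ℤ) : ℝ) * p ω x y)
      (0 : Fin d → ℝ)) (ω : Ω)
    (hrange : ∀ ω x y, p ω x y ≠ 0 → ∃ i, y - x = dv i) (α : Fin d) :
    ∑ i : Fin N, ((dv i α : ℤ) : ℝ) * q p dv ω i = 0 := by
  have h1 : HasSum (fun y : Zd d => (((y - 0) α : ℤ) : ℝ) * p ω 0 y) 0 :=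
    Pi.hasSum.1 (hdrift ω 0) α
  have h2 : HasSum (fun y : Zd d => (((y - 0) α : ℤ) : ℝ) * p ω 0 y)
      (∑ y ∈ Finset.image dv Finset.univ, (((y - 0) α : ℤ) : ℝ) * p ω 0 y) := by
    apply hasSum_sum_of_ne_finset_zero
    intro y hy
    rcases eq_or_ne (p ω 0 y) 0 with h | h
    · rw [h, mul_zero]
    · obtain ⟨i, hi⟩ := hrange ω 0 y h
      exact absurd (Finset.mem_image.2 ⟨i, Finset.mem_univ i, by rw [← hi]; simp⟩) hy
  have h3 := h2.unique h1
  rw [Finset.sum_image (fun a _ b _ h => hdv h)] at h3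
  rw [← h3]
  apply Finset.sum_congr rfl
  intro i _
  simp [q]

lemma sum_q_smul_dvR [NeZero N] (hdv : Function.Injective dv)
    (hdrift : ∀ ω x, HasSum
      (fun y : Zd d => fun α : Fin d => (((y - x) α : ℤ) : ℝ) * p ω x y)
      (0 : Fin d → ℝ)) (ω : Ω)
    (hrange : ∀ ω x y, p ω x y ≠ 0 → ∃ i, y - x = dv i) :
    ∑ i : Fin N, q p dv ω i • dvR dv i = 0 := by
  funext α
  rw [Finset.sum_apply]
  simp only [Pi.smul_apply, smul_eq_mul, Pi.zero_apply, dvR]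
  rw [← sum_dv_mul_q p dv hdv hdrift ω hrange α]
  exact Finset.sum_congr rfl fun i _ => mul_comm _ _

end Aux


section Meas
variable {κ X Y : Type*} [MeasurableSpace X] [MeasurableSpace Y] [Countable κ]

lemma measurable_apply_countable {g : X → κ} {F : κ → X → Y}
    (hg : ∀ i, MeasurableSet {x | g x = i}) (hF : ∀ i, Measurable (F i)) :
    Measurable fun x => F (g x) x := by
  intro A hA
  have h : (fun x => F (g x) x) ⁻¹' A = ⋃ i, ({x | g x = i} ∩ F i ⁻¹' A) := by
    ext x
    simp only [Set.mem_iUnion, Set.mem_inter_iff, Set.mem_setOf_eq, Set.mem_preimage]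
    constructor
    · intro h; exact ⟨g x, rfl, h⟩
    · rintro ⟨i, hi, h⟩; rwa [hi]
  rw [h]
  exact MeasurableSet.iUnion fun i => (hg i).inter (hF i hA)

lemma measurable_comp_countable {g : X → κ} (hg : ∀ i, MeasurableSet {x | g x = i})
    (F : κ → Y) : Measurable fun x => F (g x) :=
  measurable_apply_countable hg (fun i => measurable_const)

end Meas

section Meas2
variable [MeasurableSpace Ω] [NeZero N]
variable (τ : Zd d → Ω → Ω) (p : Ω → Zd d → Zd d → ℝ) (dv : Fin N → Zd d)

lemma measurable_aPt (hp_meas : ∀ x y, Measurable fun ω => p ω x y) (n : ℕ) :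
    Measurable fun ω => aPt p dv ω n := by
  induction n with
  | zero => simpa [aPt] using measurable_const
  | succ n ih =>
    show Measurable fun ω => aPt p dv ω n + _
    apply ih.add
    split
    · exact hp_meas 0 _
    · exact measurable_const

lemma measurableSet_idx_fiber (hp_meas : ∀ x y, Measurable fun ω => p ω x y)
    (hp_nn : ∀ ω x y, 0 ≤ p ω x y) (i : Fin N) :
    MeasurableSet {x : ℝ × Ω | idx p dv x.1 x.2 = i} := by
  classical
  set E : Fin N → Set (ℝ × Ω) :=
    fun j => {x | aPt p dv x.2 j ≤ x.1 ∧ x.1 < aPt p dv x.2 (↑j + 1)} with hE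
  have hEmeas : ∀ j, MeasurableSet (E j) := by
    intro j
    apply MeasurableSet.inter
    · exact measurableSet_le ((measurable_aPt p dv hp_meas _).comp measurable_snd)
        measurable_fst
    · have h2 : Measurable fun x : ℝ × Ω => aPt p dv x.2 (↑j + 1) :=
        (measurable_aPt p dv hp_meas (j.val + 1)).comp measurable_snd
      exact measurableSet_lt measurable_fst h2
  have key : ∀ x : ℝ × Ω, ∀ hex : (∃ j : Fin N,
        aPt p dv x.2 j ≤ x.1 ∧ x.1 < aPt p dv x.2 (↑j + 1)),
      ∀ j : Fin N, (idx p dv x.1 x.2 = j ↔ x ∈ E j) := by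
    intro x hex j
    rw [idx, dif_pos hex]
    constructor
    · rintro rfl; exact hex.choose_spec
    · intro hj
      exact Fin.ext (step_unique (aPt_mono p dv hp_nn x.2) hex.choose_spec hj)
  rcases eq_or_ne i 0 with rfl | hi
  · have : {x : ℝ × Ω | idx p dv x.1 x.2 = 0} = E 0 ∪ (⋃ j, E j)ᶜ := by
      ext x
      by_cases hex : (∃ j : Fin N, aPt p dv x.2 j ≤ x.1 ∧ x.1 < aPt p dv x.2 (↑j + 1))
      · have hxU : x ∈ ⋃ j, E j := by
          obtain ⟨j, hj⟩ := hex
          exact Set.mem_iUnion.2 ⟨j, hj⟩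
        simp only [Set.mem_setOf_eq, Set.mem_union, Set.mem_compl_iff, hxU,
          not_true_eq_false, or_false]
        exact key x hex 0
      · have hxU : x ∉ ⋃ j, E j := by
          intro hx
          exact hex (by simpa [hE] using Set.mem_iUnion.1 hx)
        simp only [Set.mem_setOf_eq, Set.mem_union, Set.mem_compl_iff, hxU,
          not_false_eq_true, or_true, iff_true]
        rw [idx, dif_neg hex]
    rw [this]
    exact (hEmeas 0).union (MeasurableSet.iUnion hEmeas).compl
  · have : {x : ℝ × Ω | idx p dv x.1 x.2 = i} = E i := by
      ext x
      by_cases hex : (∃ j : Fin N, aPt p dv x.2 j ≤ x.1 ∧ x.1 < aPt p dv x.2 (↑j + 1))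
      · exact key x hex i
      · simp only [Set.mem_setOf_eq]
        rw [idx, dif_neg hex]
        constructor
        · intro h; exact absurd h.symm hi
        · intro hj; exact absurd ⟨i, hj⟩ hex
    rw [this]
    exact hEmeas i

variable (hτ : ∀ z : Zd d, Measurable (τ z))
variable (hp_meas : ∀ x y, Measurable fun ω => p ω x y)
variable (hp_nn : ∀ ω x y, 0 ≤ p ω x y)

include hp_meas hp_nn

lemma measurable_DsplP :
    Measurable fun x : ℝ × Ω => Dspl p dv x.1 x.2 :=
  measurable_comp_countable (measurableSet_idx_fiber p dv hp_meas hp_nn) dv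

lemma measurable_DsplR :
    Measurable fun x : ℝ × Ω => dvR dv (idx p dv x.1 x.2) :=
  measurable_comp_countable (measurableSet_idx_fiber p dv hp_meas hp_nn) (dvR dv)

lemma measurable_fibP :
    Measurable fun x : ℝ × Ω => fib p dv x.1 x.2 := by
  have : ∀ i : Fin N, Measurable fun x : ℝ × Ω =>
      (q p dv x.2 i)⁻¹ * (x.1 - aPt p dv x.2 ↑i) := by
    intro i
    exact (((hp_meas 0 (dv i)).comp measurable_snd).inv).mul
      (measurable_fst.sub ((measurable_aPt p dv hp_meas ↑i).comp measurable_snd))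
  exact measurable_apply_countable (measurableSet_idx_fiber p dv hp_meas hp_nn) this

include hτ in
lemma measurable_T : Measurable (T τ p dv) := by
  apply Measurable.prod
  · exact measurable_fibP p dv hp_meas hp_nn
  · show Measurable fun x : ℝ × Ω => τ (Dspl p dv x.1 x.2) x.2
    have : ∀ i : Fin N, Measurable fun x : ℝ × Ω => τ (dv i) x.2 :=
      fun i => (hτ (dv i)).comp measurable_snd
    exact measurable_apply_countable (measurableSet_idx_fiber p dv hp_meas hp_nn) this

/-- the path of indices up to time `n` -/
noncomputable def pathMap (n : ℕ) (x : ℝ × Ω) : Fin n → Fin N :=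
  fun k => idx p dv ((T τ p dv)^[(k : ℕ)] x).1 ((T τ p dv)^[(k : ℕ)] x).2

include hτ in
lemma measurableSet_path_fiber (n : ℕ) (v : Fin n → Fin N) :
    MeasurableSet {x : ℝ × Ω | pathMap τ p dv n x = v} := by
  have h : {x : ℝ × Ω | pathMap τ p dv n x = v}
      = ⋂ k : Fin n, ((T τ p dv)^[(k : ℕ)]) ⁻¹' {y : ℝ × Ω | idx p dv y.1 y.2 = v k} := by
    ext x
    simp only [Set.mem_setOf_eq, Set.mem_iInter, Set.mem_preimage, funext_iff]
    rfl
  rw [h]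
  exact MeasurableSet.iInter fun k =>
    ((measurable_T τ p dv hτ hp_meas hp_nn).iterate (k : ℕ))
      (measurableSet_idx_fiber p dv hp_meas hp_nn (v k))

omit [MeasurableSpace Ω] hp_meas hp_nn in
lemma X_eq_sum_path (n : ℕ) (x : ℝ × Ω) :
    X τ p dv n x = ∑ k : Fin n, dv (pathMap τ p dv n x k) := by
  rw [X, ← Fin.sum_univ_eq_sum_range
    (fun k => Dspl p dv ((T τ p dv)^[k] x).1 ((T τ p dv)^[k] x).2) n]
  rfl

include hτ in
lemma measurable_X (n : ℕ) : Measurable (X τ p dv n) := by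
  apply Finset.measurable_sum
  intro k _
  exact (measurable_DsplP p dv hp_meas hp_nn).comp
    ((measurable_T τ p dv hτ hp_meas hp_nn).iterate k)

end Meas2

section Integral
variable [NeZero N] [MeasurableSpace Ω]
variable (p : Ω → Zd d → Zd d → ℝ) (dv : Fin N → Zd d)

/-- uniform bound for the displacement vectors -/
noncomputable def dvBound (dv : Fin N → Zd d) : ℝ :=
  ∑ j : Fin N, ∑ β : Fin d, |((dv j β : ℤ) : ℝ)|

lemma dvBound_nonneg : 0 ≤ dvBound dv :=
  Finset.sum_nonneg fun j _ => Finset.sum_nonneg fun β _ => abs_nonneg _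

lemma norm_dvR_le (i : Fin N) : ‖dvR dv i‖ ≤ dvBound dv := by
  rw [pi_norm_le_iff_of_nonneg (dvBound_nonneg dv)]
  intro α
  have h1 : |((dv i α : ℤ) : ℝ)| ≤ ∑ β : Fin d, |((dv i β : ℤ) : ℝ)| :=
    Finset.single_le_sum (f := fun β => |((dv i β : ℤ) : ℝ)|)
      (fun β _ => abs_nonneg _) (Finset.mem_univ α)
  have h2 : ∑ β : Fin d, |((dv i β : ℤ) : ℝ)| ≤ dvBound dv :=
    Finset.single_le_sum (f := fun j => ∑ β : Fin d, |((dv j β : ℤ) : ℝ)|)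
      (fun j _ => Finset.sum_nonneg fun β _ => abs_nonneg _) (Finset.mem_univ i)
  calc ‖((dv i α : ℤ) : ℝ)‖ = |((dv i α : ℤ) : ℝ)| := Real.norm_eq_abs _
  _ ≤ _ := le_trans h1 h2

lemma integrable_bdd_meas {Y : Type*} [MeasurableSpace Y] {μ : Measure Y} [IsFiniteMeasure μ]
    {f : Y → Fin d → ℝ} (hf : Measurable f) {C : ℝ} (hC : ∀ y, ‖f y‖ ≤ C) :
    Integrable f μ :=
  (memLp_top_of_bound hf.aestronglyMeasurable C (Eventually.of_forall hC)).integrable le_top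

lemma measurable_dvR_idx_left (hp_meas : ∀ x y, Measurable fun ω => p ω x y)
    (hp_nn : ∀ ω x y, 0 ≤ p ω x y) (ω : Ω) :
    Measurable fun s : ℝ => dvR dv (idx p dv s ω) := by
  have hmap : Measurable fun s : ℝ => (s, ω) := measurable_id.prodMk measurable_const
  exact measurable_comp_countable (g := fun s => idx p dv s ω)
    (fun i => hmap (measurableSet_idx_fiber p dv hp_meas hp_nn i)) (dvR dv)

lemma integral_dvR_idx
    (hp_meas : ∀ x y, Measurable fun ω => p ω x y)
    (hp_nn : ∀ ω x y, 0 ≤ p ω x y)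
    (hdv : Function.Injective dv)
    (hnorm : ∀ ω x, HasSum (fun y => p ω x y) 1)
    (hrange : ∀ ω x y, p ω x y ≠ 0 → ∃ i, y - x = dv i)
    (hdrift : ∀ ω x, HasSum
      (fun y : Zd d => fun α : Fin d => (((y - x) α : ℤ) : ℝ) * p ω x y)
      (0 : Fin d → ℝ))
    (ω : Ω) :
    ∫ s in Set.Ico (0:ℝ) 1, dvR dv (idx p dv s ω) = 0 := by
  set G : ℝ → Fin d → ℝ := fun s => dvR dv (idx p dv s ω) with hG
  have hGmeas : Measurable G := measurable_dvR_idx_left p dv hp_meas hp_nn ω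
  have hGint : ∀ a b : ℝ, IntervalIntegrable G volume a b := by
    intro a b
    constructor
    · exact integrable_bdd_meas hGmeas (fun s => norm_dvR_le dv _)
    · exact integrable_bdd_meas hGmeas (fun s => norm_dvR_le dv _)
  have hmono := aPt_mono p dv hp_nn ω
  have h01 : ∫ s in Set.Ico (0:ℝ) 1, G s = ∫ s in (0:ℝ)..1, G s := by
    rw [intervalIntegral.integral_of_le zero_le_one, integral_Ico_eq_integral_Ioo,
      integral_Ioc_eq_integral_Ioo]
  have hends : ∫ s in (0:ℝ)..1, G s
      = ∫ s in (aPt p dv ω 0)..(aPt p dv ω N), G s := by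
    rw [aPt_N p dv hdv hnorm hrange ω]
    norm_num [aPt]
  have hadj : ∑ k ∈ Finset.range N,
        ∫ s in (aPt p dv ω k)..(aPt p dv ω (k+1)), G s
      = ∫ s in (aPt p dv ω 0)..(aPt p dv ω N), G s :=
    intervalIntegral.sum_integral_adjacent_intervals fun k _ => hGint _ _
  have hpiece : ∀ k : ℕ, ∀ hk : k < N,
      ∫ s in (aPt p dv ω k)..(aPt p dv ω (k+1)), G s
        = q p dv ω ⟨k, hk⟩ • dvR dv ⟨k, hk⟩ := by
    intro k hk
    have hle : aPt p dv ω k ≤ aPt p dv ω (k+1) := hmono (Nat.le_succ k)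
    have hcongr : ∫ s in (aPt p dv ω k)..(aPt p dv ω (k+1)), G s
        = ∫ _s in (aPt p dv ω k)..(aPt p dv ω (k+1)), dvR dv ⟨k, hk⟩ := by
      apply intervalIntegral.integral_congr_ae
      have h0 : ∀ᵐ s : ℝ ∂volume, s ∉ ({aPt p dv ω (k+1)} : Set ℝ) :=
        compl_mem_ae_iff.mpr (measure_singleton _)
      filter_upwards [h0] with s hsne hsI
      rw [Set.uIoc_of_le hle] at hsI
      have hsend : s ≠ aPt p dv ω (k+1) := by simpa using hsne
      have hs0 : (0:ℝ) ≤ s := le_trans (aPt_nonneg p dv hp_nn ω k) (le_of_lt hsI.1)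
      have hs1 : s < 1 := by
        have h1 : aPt p dv ω (k+1) ≤ aPt p dv ω N := hmono hk
        have h2 : s < aPt p dv ω (k+1) := lt_of_le_of_ne hsI.2 hsend
        rw [aPt_N p dv hdv hnorm hrange ω] at h1
        linarith
      have hidx : idx p dv s ω = ⟨k, hk⟩ := by
        rw [idx_eq_iff p dv hp_nn hdv hnorm hrange ω hs0 hs1]
        exact ⟨le_of_lt hsI.1, lt_of_le_of_ne hsI.2 hsend⟩
      rw [hG]
      simp only [hidx]
    rw [hcongr, intervalIntegral.integral_const]
    congr 1
    have : aPt p dv ω (k+1) = aPt p dv ω k + q p dv ω ⟨k, hk⟩ := by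
      show aPt p dv ω k + _ = _
      rw [dif_pos hk]
    rw [this]; ring
  rw [h01, hends, ← hadj]
  have heq : ∀ k ∈ Finset.range N,
      ∫ s in (aPt p dv ω k)..(aPt p dv ω (k+1)), G s
        = (fun k : ℕ => if hk : k < N then q p dv ω ⟨k,hk⟩ • dvR dv ⟨k,hk⟩ else 0) k := by
    intro k hk
    rw [Finset.mem_range] at hk
    simp only [dif_pos hk]
    exact hpiece k hk
  rw [Finset.sum_congr rfl heq,
    ← Fin.sum_univ_eq_sum_range (fun k : ℕ => if hk : k < N then q p dv ω ⟨k,hk⟩ • dvR dv ⟨k,hk⟩ else 0) N]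
  have hfin : ∀ i : Fin N,
      (if hk : (i:ℕ) < N then q p dv ω ⟨i,hk⟩ • dvR dv ⟨i,hk⟩ else 0) = q p dv ω i • dvR dv i := by
    intro i
    simp only [dif_pos i.isLt]
  rw [Finset.sum_congr rfl (fun i _ => hfin i), sum_q_smul_dvR p dv hdv hdrift ω hrange]

end Integral

section Struct
variable [NeZero N]
variable (τ : Zd d → Ω → Ω) (p : Ω → Zd d → Zd d → ℝ) (dv : Fin N → Zd d)

/-- the event that the walk follows the index list `l` -/
def pathListP : List (Fin N) → ℝ → Ω → Prop
  | [] => fun _ _ => True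
  | (i :: l) => fun s ω =>
      idx p dv s ω = i ∧ pathListP l (fib p dv s ω) (τ (dv i) ω)

/-- length of the interval corresponding to an index list -/
noncomputable def cProd : List (Fin N) → Ω → ℝ
  | [] => fun _ => 1
  | (i :: l) => fun ω => q p dv ω i * cProd l (τ (dv i) ω)

/-- left endpoint of the interval corresponding to an index list -/
noncomputable def aStart : List (Fin N) → Ω → ℝ
  | [] => fun _ => 0
  | (i :: l) => fun ω => aPt p dv ω ↑i + q p dv ω i * aStart l (τ (dv i) ω)

/-- total displacement along an index list -/
def zSum (dv : Fin N → Zd d) (l : List (Fin N)) : Zd d := (l.map dv).sum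

lemma T_apply (x : ℝ × Ω) :
    T τ p dv x = (fib p dv x.1 x.2, τ (dv (idx p dv x.1 x.2)) x.2) := rfl

set_option maxHeartbeats 1000000 in
lemma structure_lemma
    (hτ_zero : τ 0 = id)
    (hτ_add : ∀ z z' ω, τ z (τ z' ω) = τ (z + z') ω)
    (hdv : Function.Injective dv)
    (hp_nn : ∀ ω x y, 0 ≤ p ω x y)
    (hnorm : ∀ ω x, HasSum (fun y => p ω x y) 1)
    (hrange : ∀ ω x y, p ω x y ≠ 0 → ∃ i, y - x = dv i) :
    ∀ (l : List (Fin N)) (ω : Ω),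
      0 ≤ cProd τ p dv l ω ∧
      0 ≤ aStart τ p dv l ω ∧
      aStart τ p dv l ω + cProd τ p dv l ω ≤ 1 ∧
      ({s : ℝ | s ∈ Set.Ico (0:ℝ) 1 ∧ pathListP τ p dv l s ω}
        = Set.Ico (aStart τ p dv l ω) (aStart τ p dv l ω + cProd τ p dv l ω)) ∧
      (∀ s ∈ Set.Ico (aStart τ p dv l ω) (aStart τ p dv l ω + cProd τ p dv l ω),
        (T τ p dv)^[l.length] (s, ω)
          = ((s - aStart τ p dv l ω) / cProd τ p dv l ω, τ (zSum dv l) ω)) := by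
  intro l
  induction l with
  | nil =>
    intro ω
    refine ⟨zero_le_one, le_refl 0, by norm_num [cProd, aStart], ?_, ?_⟩
    · ext s
      simp [pathListP, cProd, aStart]
    · intro s hs
      simp only [List.length_nil, Function.iterate_zero, id_eq, cProd, aStart, zSum,
        List.map_nil, List.sum_nil, hτ_zero]
      norm_num
  | cons i l IH =>
    intro ω
    set ω' := τ (dv i) ω with hω'
    obtain ⟨hc', hα', hsum', hset', hiter'⟩ := IH ω'
    set qi := q p dv ω i with hqi
    set A := aPt p dv ω ↑i with hA
    set α' := aStart τ p dv l ω' with hα'def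
    set c' := cProd τ p dv l ω' with hc'def
    have hqi0 : 0 ≤ qi := hp_nn ω 0 _
    have hA0 : 0 ≤ A := aPt_nonneg p dv hp_nn ω ↑i
    have hAq : aPt p dv ω (↑i + 1) = A + qi := aPt_succ_fin p dv ω i
    have hA1 : A + qi ≤ 1 := by
      rw [← hAq, ← aPt_N p dv hdv hnorm hrange ω]
      exact aPt_mono p dv hp_nn ω i.isLt
    have hcc : cProd τ p dv (i :: l) ω = qi * c' := rfl
    have haa : aStart τ p dv (i :: l) ω = A + qi * α' := rfl
    have hmul : qi * (α' + c') ≤ qi * 1 := mul_le_mul_of_nonneg_left hsum' hqi0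
    have h3 : A + qi * α' + qi * c' ≤ 1 := by nlinarith
    have hfwd : ∀ s : ℝ, s ∈ Set.Ico (0:ℝ) 1 → idx p dv s ω = i →
        0 < qi ∧ fib p dv s ω = (s - A) / qi ∧ A ≤ s ∧ s < A + qi := by
      intro s hs hidx
      have hIi : A ≤ s ∧ s < A + qi := by
        have := (idx_eq_iff p dv hp_nn hdv hnorm hrange ω hs.1 hs.2 i).1 hidx
        rwa [hAq, ← hA] at this
      have hqpos : 0 < qi := by linarith [hIi.1, hIi.2]
      refine ⟨hqpos, ?_, hIi⟩
      rw [fib, hidx, ← hA, ← hqi]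
      rw [inv_mul_eq_div]
    refine ⟨mul_nonneg hqi0 hc', by rw [haa]; nlinarith [hA0, mul_nonneg hqi0 hα'], by rw [hcc, haa]; linarith, ?_, ?_⟩
    · rw [hcc, haa]
      ext s
      simp only [Set.mem_setOf_eq, Set.mem_Ico, pathListP]
      constructor
      · rintro ⟨hs, hidx, hrest⟩
        obtain ⟨hqpos, hfib, hIi⟩ := hfwd s (by exact hs) hidx
        have hu : fib p dv s ω ∈ Set.Ico (0:ℝ) 1 := by
          rw [hfib]
          constructor
          · apply div_nonneg _ hqi0; linarith [hIi.1]
          · rw [div_lt_one hqpos]; linarith [hIi.2]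
        have hmem : fib p dv s ω ∈ Set.Ico α' (α' + c') := by
          rw [← hset']
          exact ⟨hu, hrest⟩
        rw [hfib] at hmem
        obtain ⟨hm1, hm2⟩ := hmem
        rw [le_div_iff₀ hqpos] at hm1
        rw [div_lt_iff₀ hqpos] at hm2
        constructor
        · nlinarith
        · nlinarith
      · intro hs
        have h1 : 0 < qi * c' := by linarith [hs.1, hs.2]
        have hqpos : 0 < qi := by
          rcases lt_or_eq_of_le hqi0 with h | h
          · exact h
          · exfalso; rw [← h] at h1; simp at h1
        have hcpos : 0 < c' := by
          rcases lt_or_eq_of_le hc' with h | h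
          · exact h
          · exfalso; rw [← h] at h1; simp at h1
        have hα'0 : 0 ≤ qi * α' := mul_nonneg hqi0 hα'
        have hs0 : (0:ℝ) ≤ s := by linarith [hs.1]
        have hs1 : s < 1 := by linarith [hs.2]
        have hidx : idx p dv s ω = i := by
          rw [idx_eq_iff p dv hp_nn hdv hnorm hrange ω hs0 hs1 i, hAq, ← hA]
          constructor
          · linarith [hs.1]
          · linarith [hs.2]
        obtain ⟨_, hfib, _⟩ := hfwd s ⟨hs0, hs1⟩ hidx
        have hmem : fib p dv s ω ∈ Set.Ico α' (α' + c') := by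
          rw [hfib]
          constructor
          · rw [le_div_iff₀ hqpos]; linarith [hs.1]
          · rw [div_lt_iff₀ hqpos]; linarith [hs.2]
        have hLHS : fib p dv s ω ∈ {u : ℝ | u ∈ Set.Ico (0:ℝ) 1 ∧ pathListP τ p dv l u ω'} := by
          rw [hset']; exact hmem
        exact ⟨⟨hs0, hs1⟩, hidx, hLHS.2⟩
    · intro s hs
      rw [hcc, haa] at hs
      have h1 : 0 < qi * c' := by linarith [hs.1, hs.2]
      have hqpos : 0 < qi := by
        rcases lt_or_eq_of_le hqi0 with h | h
        · exact h
        · exfalso; rw [← h] at h1; simp at h1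
      have hcpos : 0 < c' := by
        rcases lt_or_eq_of_le hc' with h | h
        · exact h
        · exfalso; rw [← h] at h1; simp at h1
      have hα'0 : 0 ≤ qi * α' := mul_nonneg hqi0 hα'
      have hs0 : (0:ℝ) ≤ s := by linarith [hs.1]
      have hs1 : s < 1 := by linarith [hs.2]
      have hidx : idx p dv s ω = i := by
        rw [idx_eq_iff p dv hp_nn hdv hnorm hrange ω hs0 hs1 i, hAq, ← hA]
        constructor
        · linarith [hs.1]
        · linarith [hs.2]
      obtain ⟨_, hfib, _⟩ := hfwd s ⟨hs0, hs1⟩ hidx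
      have hmem : fib p dv s ω ∈ Set.Ico α' (α' + c') := by
        rw [hfib]
        constructor
        · rw [le_div_iff₀ hqpos]; linarith [hs.1]
        · rw [div_lt_iff₀ hqpos]; linarith [hs.2]
      have hstep : T τ p dv (s, ω) = ((s - A) / qi, ω') := by
        rw [T_apply]
        simp only [hidx, hfib]
        rfl
      rw [hfib] at hmem
      rw [List.length_cons, Function.iterate_succ_apply, hstep,
        hiter' _ hmem]
      have henv : τ (zSum dv l) ω' = τ (zSum dv (i :: l)) ω := by
        rw [hω', hτ_add]
        congr 1
        show zSum dv l + dv i = zSum dv (i :: l)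
        rw [zSum, zSum, List.map_cons, List.sum_cons, add_comm]
      rw [henv, haa, hcc]
      congr 1
      field_simp
      ring
end Struct

section Bridge
variable [NeZero N]
variable (τ : Zd d → Ω → Ω) (p : Ω → Zd d → Zd d → ℝ) (dv : Fin N → Zd d)

lemma pathListP_iff (l : List (Fin N)) : ∀ (s : ℝ) (ω : Ω),
    pathListP τ p dv l s ω ↔
    ∀ k (h : k < l.length),
      idx p dv ((T τ p dv)^[k] (s, ω)).1 ((T τ p dv)^[k] (s, ω)).2 = l.get ⟨k, h⟩ := by
  induction l with
  | nil => intro s ω; simp [pathListP]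
  | cons i l IH =>
    intro s ω
    simp only [pathListP, List.length_cons]
    constructor
    · rintro ⟨hidx, hrest⟩ k hk
      match k with
      | 0 => simpa using hidx
      | (k + 1) =>
        rw [Function.iterate_succ_apply]
        have hT : T τ p dv (s, ω) = (fib p dv s ω, τ (dv i) ω) := by
          rw [T_apply, hidx]
        rw [hT]
        have := (IH _ _).1 hrest k (Nat.succ_lt_succ_iff.1 hk)
        simpa using this
    · intro h
      have hidx : idx p dv s ω = i := by simpa using h 0 (Nat.succ_pos _)
      have hT : T τ p dv (s, ω) = (fib p dv s ω, τ (dv i) ω) := by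
        rw [T_apply, hidx]
      refine ⟨hidx, (IH _ _).2 ?_⟩
      intro k hk
      have h2 := h (k + 1) (Nat.succ_lt_succ hk)
      rw [Function.iterate_succ_apply, hT] at h2
      simpa using h2

lemma pathMap_eq_iff (n : ℕ) (v : Fin n → Fin N) (s : ℝ) (ω : Ω) :
    pathMap τ p dv n (s, ω) = v ↔ pathListP τ p dv (List.ofFn v) s ω := by
  rw [pathListP_iff, funext_iff]
  constructor
  · intro h k hk
    have hk' : k < n := by simpa using hk
    have := h ⟨k, hk'⟩
    rw [pathMap] at this
    simp only [List.get_ofFn]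
    rw [this]
    congr 1
  · intro h k
    have hk : (k : ℕ) < (List.ofFn v).length := by simpa using k.isLt
    have := h (k : ℕ) hk
    simp only [List.get_ofFn] at this
    rw [pathMap]
    rw [this]
    congr 1

end Bridge

section Atom
variable [NeZero N] [MeasurableSpace Ω]
variable (τ : Zd d → Ω → Ω) (p : Ω → Zd d → Zd d → ℝ) (dv : Fin N → Zd d)

lemma atom_integral
    (Pm : Measure Ω) [IsProbabilityMeasure Pm]
    (hτ : ∀ z : Zd d, Measurable (τ z))
    (hτ_zero : τ 0 = id)
    (hτ_add : ∀ z z' ω, τ z (τ z' ω) = τ (z + z') ω)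
    (hdv : Function.Injective dv)
    (hp_meas : ∀ x y, Measurable fun ω => p ω x y)
    (hp_nn : ∀ ω x y, 0 ≤ p ω x y)
    (hnorm : ∀ ω x, HasSum (fun y => p ω x y) 1)
    (hrange : ∀ ω x y, p ω x y ≠ 0 → ∃ i, y - x = dv i)
    (hdrift : ∀ ω x, HasSum
      (fun y : Zd d => fun α : Fin d => (((y - x) α : ℤ) : ℝ) * p ω x y)
      (0 : Fin d → ℝ))
    (n : ℕ) (v : Fin n → Fin N) :
    ∫ x in {x : ℝ × Ω | pathMap τ p dv n x = v},
      (fun x : ℝ × Ω => dvR dv (idx p dv ((T τ p dv)^[n] x).1 ((T τ p dv)^[n] x).2)) x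
      ∂((volume.restrict (Set.Ico (0:ℝ) 1)).prod Pm) = 0 := by
  haveI : IsProbabilityMeasure (volume.restrict (Set.Ico (0:ℝ) 1)) :=
    ⟨by simp⟩
  set μ0 := (volume.restrict (Set.Ico (0:ℝ) 1)).prod Pm with hμ0
  set A := {x : ℝ × Ω | pathMap τ p dv n x = v} with hAdef
  have hA : MeasurableSet A := measurableSet_path_fiber τ p dv hτ hp_meas hp_nn n v
  set F : ℝ × Ω → Fin d → ℝ :=
    fun x => dvR dv (idx p dv ((T τ p dv)^[n] x).1 ((T τ p dv)^[n] x).2) with hFdef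
  have hFmeas : Measurable F := by
    have h1 : Measurable fun y : ℝ × Ω => dvR dv (idx p dv y.1 y.2) :=
      measurable_DsplR p dv hp_meas hp_nn
    exact h1.comp ((measurable_T τ p dv hτ hp_meas hp_nn).iterate n)
  have hFbd : ∀ x, ‖F x‖ ≤ dvBound dv := fun x => norm_dvR_le dv _
  have hFint : Integrable F μ0 := integrable_bdd_meas hFmeas hFbd
  have hInd : Integrable (A.indicator F) μ0 := hFint.indicator hA
  rw [← integral_indicator hA]
  rw [integral_prod_symm _ hInd]
  have hinner : ∀ ω : Ω,
      (∫ s, A.indicator F (s, ω) ∂(volume.restrict (Set.Ico (0:ℝ) 1))) = 0 := by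
    intro ω
    set l := List.ofFn v with hl
    obtain ⟨hc, hα, hsum, hset, hiter⟩ :=
      structure_lemma τ p dv hτ_zero hτ_add hdv hp_nn hnorm hrange l ω
    set α0 := aStart τ p dv l ω with hα0
    set c0 := cProd τ p dv l ω with hc0
    have hslice : (fun s : ℝ => A.indicator F (s, ω))
        = ({s : ℝ | (s, ω) ∈ A}).indicator (fun s => F (s, ω)) := by
      funext s
      by_cases h : (s, ω) ∈ A
      · rw [Set.indicator_of_mem h, Set.indicator_of_mem (by exact h)]
      · rw [Set.indicator_of_notMem h, Set.indicator_of_notMem (by exact h)]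
    have hsl_meas : MeasurableSet {s : ℝ | (s, ω) ∈ A} :=
      (measurable_id.prodMk measurable_const) hA
    rw [hslice, integral_indicator hsl_meas, Measure.restrict_restrict hsl_meas]
    have hseteq : {s : ℝ | (s, ω) ∈ A} ∩ Set.Ico (0:ℝ) 1 = Set.Ico α0 (α0 + c0) := by
      rw [← hset]
      ext s
      simp only [Set.mem_inter_iff, Set.mem_setOf_eq, hAdef]
      rw [pathMap_eq_iff τ p dv n v s ω]
      tauto
    rw [hseteq]
    rcases eq_or_lt_of_le hc with hczero | hcpos
    · rw [← hczero, add_zero, Set.Ico_self]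
      simp
    · have hEqOn : Set.EqOn (fun s => F (s, ω))
          (fun s => dvR dv (idx p dv ((s - α0) / c0) (τ (zSum dv l) ω)))
          (Set.Ico α0 (α0 + c0)) := by
        intro s hsm
        have h5 := hiter s hsm
        have hlen : l.length = n := by simp [hl]
        simp only [hFdef]
        rw [← hlen, h5]
      rw [setIntegral_congr_fun (measurableSet_Ico) hEqOn]
      have hle : α0 ≤ α0 + c0 := by linarith
      have hcne : c0 ≠ 0 := ne_of_gt hcpos
      set g : ℝ → Fin d → ℝ := fun u => dvR dv (idx p dv u (τ (zSum dv l) ω)) with hg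
      have step1 : ∫ s in Set.Ico α0 (α0 + c0), g ((s - α0) / c0)
          = ∫ s in α0..(α0 + c0), g ((s - α0) / c0) := by
        rw [intervalIntegral.integral_of_le hle, integral_Ico_eq_integral_Ioo,
          integral_Ioc_eq_integral_Ioo]
      have step2 : (∫ s in α0..(α0 + c0), g ((s - α0) / c0))
          = ∫ s in (α0 - α0)..(α0 + c0 - α0), g (s / c0) :=
        intervalIntegral.integral_comp_sub_right (fun y => g (y / c0)) α0
      have step3 : (∫ s in (α0 - α0)..(α0 + c0 - α0), g (s / c0))
          = ∫ s in (0:ℝ)..c0, g (s / c0) := by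
        norm_num
      have step4 : (∫ s in (0:ℝ)..c0, g (s / c0))
          = c0 • ∫ s in (0:ℝ)/c0..c0/c0, g s :=
        intervalIntegral.integral_comp_div g hcne
      have step5 : (c0 • ∫ s in (0:ℝ)/c0..c0/c0, g s)
          = c0 • ∫ s in (0:ℝ)..1, g s := by
        rw [zero_div, div_self hcne]
      have step6 : (∫ s in (0:ℝ)..1, g s) = 0 := by
        rw [intervalIntegral.integral_of_le zero_le_one, integral_Ioc_eq_integral_Ioo,
          ← integral_Ico_eq_integral_Ioo]
        exact integral_dvR_idx p dv hp_meas hp_nn hdv hnorm hrange hdrift _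
      rw [step1, step2, step3, step4, step5, step6, smul_zero]
  simp only [hinner]
  exact integral_zero _ _

end Atom


/-- on `(Φ, μ)`, the process `(X_n)` (viewed in `ℝ^d`) is a bounded
martingale w.r.t. the filtration `ℱ_n = σ(X_1, …, X_n)`: each `X_n` is bounded and
measurable, and the conditional expectation of each increment `D_n = X_{n+1} − X_n`
given `ℱ_n` vanishes `μ`-a.s. -/
theorem walk_is_martingale
    {d N : ℕ} [NeZero N] (hd : 1 ≤ d)
    {Ω : Type*} [MeasurableSpace Ω] (Pm : Measure Ω) [IsProbabilityMeasure Pm]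
    (τ : Zd d → Ω → Ω) (p : Ω → Zd d → Zd d → ℝ) (dv : Fin N → Zd d)
    (hτ : ∀ z, MeasurePreserving (τ z) Pm Pm)
    (hτ_zero : τ 0 = id)
    (hτ_add : ∀ z z' ω, τ z (τ z' ω) = τ (z + z') ω)
    (hdv : Function.Injective dv)
    (hp_meas : ∀ x y, Measurable fun ω => p ω x y)
    (hp_nn : ∀ ω x y, 0 ≤ p ω x y)
    (hp_le : ∀ ω x y, p ω x y ≤ 1)
    (hnorm : ∀ ω x, HasSum (fun y => p ω x y) 1)
    (hrange : ∀ ω x y, p ω x y ≠ 0 → ∃ i, y - x = dv i)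
    (hequiv : ∀ ω x y z, p (τ z ω) x y = p ω (x + z) (y + z))
    (hdrift : ∀ ω x, HasSum
      (fun y : Zd d => fun α : Fin d => (((y - x) α : ℤ) : ℝ) * p ω x y)
      (0 : Fin d → ℝ)) :
    (∀ n : ℕ, Measurable (X τ p dv n)) ∧
    (∀ n : ℕ, ∃ Cb : ℝ, ∀ x : ℝ × Ω,
      ‖(fun α => ((X τ p dv n x α : ℤ) : ℝ) : Fin d → ℝ)‖ ≤ Cb) ∧
    (∀ n : ℕ,
      (((volume.restrict (Set.Ico (0:ℝ) 1)).prod Pm)[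
        (fun x => (fun α => ((X τ p dv (n+1) x α - X τ p dv n x α : ℤ) : ℝ)) :
          ℝ × Ω → Fin d → ℝ) |
        ⨆ k ∈ Finset.Icc 1 n, MeasurableSpace.comap (X τ p dv k) inferInstance])
        =ᵐ[(volume.restrict (Set.Ico (0:ℝ) 1)).prod Pm] 0) := by
  classical
  have hτm : ∀ z : Zd d, Measurable (τ z) := fun z => (hτ z).measurable
  -- cast of the walk as a sum of displacement vectors
  have hcast : ∀ (n : ℕ) (x : ℝ × Ω), (fun α => ((X τ p dv n x α : ℤ) : ℝ) : Fin d → ℝ)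
      = ∑ k ∈ Finset.range n,
          dvR dv (idx p dv ((T τ p dv)^[k] x).1 ((T τ p dv)^[k] x).2) := by
    intro n x
    funext α
    rw [X, Finset.sum_apply, Finset.sum_apply]
    push_cast
    rfl
  refine ⟨fun n => measurable_X τ p dv hτm hp_meas hp_nn n, ?_, ?_⟩
  · intro n
    refine ⟨n * dvBound dv, fun x => ?_⟩
    rw [hcast n x]
    calc ‖∑ k ∈ Finset.range n,
          dvR dv (idx p dv ((T τ p dv)^[k] x).1 ((T τ p dv)^[k] x).2)‖
        ≤ ∑ k ∈ Finset.range n,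
          ‖dvR dv (idx p dv ((T τ p dv)^[k] x).1 ((T τ p dv)^[k] x).2)‖ :=
          norm_sum_le _ _
      _ ≤ ∑ _k ∈ Finset.range n, dvBound dv :=
          Finset.sum_le_sum fun k _ => norm_dvR_le dv _
      _ = n * dvBound dv := by
          rw [Finset.sum_const, Finset.card_range, nsmul_eq_mul]
  · intro n
    haveI : IsProbabilityMeasure (volume.restrict (Set.Ico (0:ℝ) 1)) := ⟨by simp⟩
    set μ := (volume.restrict (Set.Ico (0:ℝ) 1)).prod Pm with hμ
    set F : ℝ × Ω → Fin d → ℝ :=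
      fun x => dvR dv (idx p dv ((T τ p dv)^[n] x).1 ((T τ p dv)^[n] x).2) with hFdef
    have hfF : (fun x => (fun α => ((X τ p dv (n+1) x α - X τ p dv n x α : ℤ) : ℝ)) :
        ℝ × Ω → Fin d → ℝ) = F := by
      funext x α
      have hsucc : X τ p dv (n+1) x = X τ p dv n x
          + Dspl p dv ((T τ p dv)^[n] x).1 ((T τ p dv)^[n] x).2 := by
        rw [X, X, Finset.sum_range_succ]
      rw [hsucc]
      push_cast
      simp only [Pi.add_apply]
      push_cast
      ring_nf
      rfl
    rw [hfF]
    have hFmeas : Measurable F := by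
      have h1 : Measurable fun y : ℝ × Ω => dvR dv (idx p dv y.1 y.2) :=
        measurable_DsplR p dv hp_meas hp_nn
      exact h1.comp ((measurable_T τ p dv hτm hp_meas hp_nn).iterate n)
    have hFint : Integrable F μ :=
      integrable_bdd_meas hFmeas (fun x => norm_dvR_le dv _)
    -- the σ-algebra generated by the whole index path
    have hfiber_all : ∀ S : Set (Fin n → Fin N),
        MeasurableSet ((pathMap τ p dv n) ⁻¹' S) := by
      intro S
      have h : (pathMap τ p dv n) ⁻¹' S = ⋃ w ∈ S, {x | pathMap τ p dv n x = w} := by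
        ext x
        simp only [Set.mem_preimage, Set.mem_iUnion, Set.mem_setOf_eq]
        constructor
        · intro h; exact ⟨_, h, rfl⟩
        · rintro ⟨w, hw, rfl⟩; exact hw
      rw [h]
      exact MeasurableSet.biUnion (Set.to_countable S)
        (fun w _ => measurableSet_path_fiber τ p dv hτm hp_meas hp_nn n w)
    have hGle : MeasurableSpace.comap (pathMap τ p dv n) ⊤
        ≤ (Prod.instMeasurableSpace : MeasurableSpace (ℝ × Ω)) := by
      rintro s ⟨S, -, rfl⟩
      exact hfiber_all S
    have hFle : (⨆ k ∈ Finset.Icc 1 n,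
        MeasurableSpace.comap (X τ p dv k) inferInstance)
        ≤ MeasurableSpace.comap (pathMap τ p dv n) ⊤ := by
      refine iSup₂_le fun k hk => ?_
      have hk_le : k ≤ n := (Finset.mem_Icc.1 hk).2
      have hXeq : X τ p dv k = (fun w : Fin n → Fin N =>
          ∑ j ∈ Finset.range k, if h : j < n then dv (w ⟨j, h⟩) else 0)
          ∘ (pathMap τ p dv n) := by
        funext x
        rw [Function.comp_apply, X]
        refine Finset.sum_congr rfl fun j hj => ?_
        rw [Finset.mem_range] at hj
        rw [dif_pos (lt_of_lt_of_le hj hk_le)]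
        rfl
      rw [hXeq, ← MeasurableSpace.comap_comp]
      exact MeasurableSpace.comap_mono le_top
    have hFle0 : (⨆ k ∈ Finset.Icc 1 n,
        MeasurableSpace.comap (X τ p dv k) inferInstance)
        ≤ (Prod.instMeasurableSpace : MeasurableSpace (ℝ × Ω)) := le_trans hFle hGle
    -- conditional expectation w.r.t. the path σ-algebra vanishes
    have hcondG : (0 : ℝ × Ω → Fin d → ℝ)
        =ᵐ[μ] μ[F | MeasurableSpace.comap (pathMap τ p dv n) ⊤] := by
      refine ae_eq_condExp_of_forall_setIntegral_eq hGle hFint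
        (fun s _ _ => (integrable_zero _ _ _).integrableOn) ?_ ?_
      · rintro s ⟨S, -, rfl⟩ -
        simp only [Pi.zero_apply, integral_zero]
        symm
        have hsplit : (pathMap τ p dv n) ⁻¹' S
            = ⋃ w ∈ (Set.toFinite S).toFinset, {x | pathMap τ p dv n x = w} := by
          ext x
          simp only [Set.mem_preimage, Set.mem_iUnion, Set.mem_setOf_eq,
            Set.Finite.mem_toFinset]
          constructor
          · intro h; exact ⟨_, h, rfl⟩
          · rintro ⟨w, hw, rfl⟩; exact hw
        rw [hsplit, integral_biUnion_finset]
        · apply Finset.sum_eq_zero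
          intro w _
          exact atom_integral τ p dv Pm hτm hτ_zero hτ_add hdv hp_meas hp_nn
            hnorm hrange hdrift n w
        · exact fun w _ => measurableSet_path_fiber τ p dv hτm hp_meas hp_nn n w
        · intro w1 _ w2 _ hne
          rw [Function.onFun, Set.disjoint_left]
          rintro x hx1 hx2
          exact hne (hx1.symm.trans hx2)
        · exact fun w _ => hFint.integrableOn
      · exact ⟨0, @stronglyMeasurable_zero _ _ (MeasurableSpace.comap (pathMap τ p dv n) ⊤) _ _, Filter.EventuallyEq.rfl⟩
    have h1 := condExp_condExp_of_le hFle hGle (μ := μ) (f := F)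
    have h3 : μ[μ[F | MeasurableSpace.comap (pathMap τ p dv n) ⊤] | (⨆ k ∈ Finset.Icc 1 n,
        MeasurableSpace.comap (X τ p dv k) inferInstance)]
        =ᵐ[μ] μ[(0 : ℝ × Ω → Fin d → ℝ) | (⨆ k ∈ Finset.Icc 1 n,
        MeasurableSpace.comap (X τ p dv k) inferInstance)] :=
      condExp_congr_ae hcondG.symm
    refine ((h1.symm.trans h3).trans ?_)
    rw [condExp_zero]

end RWRE
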